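/- Let L be the clause gadget (3-cycle z1z2z3, 14-cycle u1…u14, pendants ℓ4, ℓ7, ℓ10, and edges z1u1, u4ℓ4, u7ℓ7, u10ℓ10). For any prescribed values p4, p7, p10 ∈ {(2,1),(3,0)} with at least one equal to (2,1), there exists a 2-edge-coloring c of L such that c* is a proper vertex coloring of L and c*(u4)=p4, c*(u7)=p7, c*(u10)=p10. -/

import Mathlib

open Finset

/-- The color-blind partition of `v`: the multiset of (nonzero) counts of incident
edges of each color, i.e. the partition of `deg v` with trailing zeroes removed. -/
def cbp {V : Type*} [Fintype V] [DecidableEq V] (G : SimpleGraph V) [DecidableRel G.Adj]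
    {k : ℕ} (c : Sym2 V → Fin k) (v : V) : Multiset ℕ :=
  (((Finset.univ : Finset (Fin k)).val.map fun i =>
    ((G.neighborFinset v).filter fun w => c s(v, w) = i).card).filter fun m => m ≠ 0)

/-- `c` is a color-blind distinguishing edge-coloring of `G`. -/
def IsCBD {V : Type*} [Fintype V] [DecidableEq V] (G : SimpleGraph V) [DecidableRel G.Adj]
    {k : ℕ} (c : Sym2 V → Fin k) : Prop :=
  ∀ u v : V, G.Adj u v → cbp G c u ≠ cbp G c v

/-- Edges of the clause gadget: vertices 0,1,2 are z1,z2,z3; 3,...,16 are u1,...,u14;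
17,18,19 are the pendants ℓ4, ℓ7, ℓ10 (so u4 = 6, u7 = 9, u10 = 12). -/
def clauseRel (p q : Fin 20) : Prop :=
  (p.val, q.val) ∈ [(0,1),(1,2),(0,2),(0,3),(3,4),(4,5),(5,6),(6,7),(7,8),(8,9),(9,10),
    (10,11),(11,12),(12,13),(13,14),(14,15),(15,16),(16,3),(6,17),(9,18),(12,19)]

instance : DecidableRel clauseRel := fun p q => by unfold clauseRel; infer_instance

/-- The clause gadget `L`. -/
def clauseGadget : SimpleGraph (Fin 20) where
  Adj p q := p ≠ q ∧ (clauseRel p q ∨ clauseRel q p)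
  symm := ⟨fun p q h => ⟨h.1.symm, h.2.symm⟩⟩
  loopless := ⟨fun p h => h.1 rfl⟩

instance : DecidableRel clauseGadget.Adj := fun p q =>
  inferInstanceAs (Decidable (p ≠ q ∧ (clauseRel p q ∨ clauseRel q p)))

def col0 : Sym2 (Fin 20) → Fin 2 := fun e => if e ∈ ([s(0,1), s(5,6), s(8,9), s(11,12), s(13,14), s(14,15)] : List (Sym2 (Fin 20))) then 1 else 0  -- ('21', '21', '21')
def col1 : Sym2 (Fin 20) → Fin 2 := fun e => if e ∈ ([s(0,1), s(5,6), s(6,7), s(9,10), s(13,14), s(14,15)] : List (Sym2 (Fin 20))) then 1 else 0  -- ('21', '21', '3')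
def col2 : Sym2 (Fin 20) → Fin 2 := fun e => if e ∈ ([s(0,1), s(5,6), s(6,7), s(11,12), s(13,14), s(14,15)] : List (Sym2 (Fin 20))) then 1 else 0  -- ('21', '3', '21')
def col3 : Sym2 (Fin 20) → Fin 2 := fun e => if e ∈ ([s(0,1), s(5,6), s(8,9), s(9,10), s(13,14), s(14,15), s(9,18)] : List (Sym2 (Fin 20))) then 1 else 0  -- ('21', '3', '3')
def col4 : Sym2 (Fin 20) → Fin 2 := fun e => if e ∈ ([s(0,1), s(0,3), s(3,4), s(8,9), s(9,10), s(12,13), s(13,14), s(16,3)] : List (Sym2 (Fin 20))) then 1 else 0  -- ('3', '21', '21')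
def col5 : Sym2 (Fin 20) → Fin 2 := fun e => if e ∈ ([s(0,1), s(5,6), s(6,7), s(9,10), s(13,14), s(14,15), s(6,17)] : List (Sym2 (Fin 20))) then 1 else 0  -- ('3', '21', '3')
def col6 : Sym2 (Fin 20) → Fin 2 := fun e => if e ∈ ([s(0,1), s(5,6), s(6,7), s(11,12), s(13,14), s(14,15), s(6,17)] : List (Sym2 (Fin 20))) then 1 else 0  -- ('3', '3', '21')

theorem clause_gadget_realizes_prescribed_partitions (p4 p7 p10 : Multiset ℕ)
    (h4 : p4 = {2, 1} ∨ p4 = {3}) (h7 : p7 = {2, 1} ∨ p7 = {3})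
    (h10 : p10 = {2, 1} ∨ p10 = {3})
    (hone : p4 = {2, 1} ∨ p7 = {2, 1} ∨ p10 = {2, 1}) :
    ∃ c : Sym2 (Fin 20) → Fin 2, IsCBD clauseGadget c ∧
      cbp clauseGadget c 6 = p4 ∧ cbp clauseGadget c 9 = p7 ∧
      cbp clauseGadget c 12 = p10 := by
  rcases h4 with h4|h4 <;> rcases h7 with h7|h7 <;> rcases h10 with h10|h10 <;>
    subst h4 <;> subst h7 <;> subst h10
  · exact ⟨col0, by unfold IsCBD; decide, by decide, by decide, by decide⟩
  · exact ⟨col1, by unfold IsCBD; decide, by decide, by decide, by decide⟩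
  · exact ⟨col2, by unfold IsCBD; decide, by decide, by decide, by decide⟩
  · exact ⟨col3, by unfold IsCBD; decide, by decide, by decide, by decide⟩
  · exact ⟨col4, by unfold IsCBD; decide, by decide, by decide, by decide⟩
  · exact ⟨col5, by unfold IsCBD; decide, by decide, by decide, by decide⟩
  · exact ⟨col6, by unfold IsCBD; decide, by decide, by decide, by decide⟩
  · simp at hone
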